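/- Let m, k be positive integers. For integers v ≥ 0 and r ∈ {0, 1, 4, 5}, let J_r(v) = { 1 ≤ j ≤ 2^{2v+3} : (j − mk)² ≡ 4k + 4^v·r (mod 2^{2v+3}) and j·m ≡ 0 (mod 2) }. Let v₀ = 2 if m is odd and v₀ = 3 if m is even, set 𝒥(v) = 2^{1−v₀} · ( |J_0(v)|/2 + |J_1(v)|/1 + |J_4(v)|/2 + |J_5(v)|/3 ), and 𝒥 = Σ_{v ≥ 0, gcd(2^v, k) = 1} 𝒥(v)/8^v (so the sum is only the v = 0 term when k is even). Then 𝒥 = 2/3 if both m and k are odd; 𝒥 = 3/2 if both m and k are even; and 𝒥 = 1 if exactly one of m, k is even. -/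

import Mathlib

open scoped Classical

open Finset

/-! ### Integer arithmetic lemmas -/

lemma sq_emod_two (a : ℤ) : a ^ 2 % 2 = a % 2 := by
  rcases Int.even_or_odd a with ⟨c, rfl⟩ | ⟨c, rfl⟩
  · have : (c + c) ^ 2 = 2 * (2 * c ^ 2) := by ring
    omega
  · have : (2 * c + 1) ^ 2 = 2 * (2 * c ^ 2 + 2 * c) + 1 := by ring
    omega

lemma odd_sq_mod8 (b : ℤ) (hb : b % 2 = 1) : b ^ 2 % 8 = 1 := by
  obtain ⟨c, rfl⟩ : ∃ c, b = 2 * c + 1 := ⟨b / 2, by omega⟩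
  obtain ⟨d, hd⟩ := Int.even_mul_succ_self c
  have h : (2 * c + 1) ^ 2 = 4 * (c * (c + 1)) + 1 := by ring
  omega

lemma hensel (u : ℤ) (hu : u % 8 = 1) :
    ∀ n, 3 ≤ n → ∃ s : ℤ, s % 2 = 1 ∧ (2 ^ n : ℤ) ∣ s ^ 2 - u := by
  intro n hn
  induction n with
  | zero => omega
  | succ n ih =>
    rcases Nat.lt_or_ge n 3 with h3 | h3
    · have hn2 : n = 2 := by omega
      subst hn2
      refine ⟨1, by norm_num, ⟨(1 - u) / 8, ?_⟩⟩
      have h8 : ((2:ℤ) ^ 3) = 8 := by norm_num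
      rw [h8]
      omega
    · obtain ⟨s, hs1, d, hd⟩ := ih h3
      obtain ⟨m, rfl⟩ : ∃ m, n = m + 3 := ⟨n - 3, by omega⟩
      obtain ⟨e, he⟩ : ∃ e, s = 2 * e + 1 := ⟨s / 2, by omega⟩
      refine ⟨s + d * 2 ^ (m + 2), by
        have h2 : s + d * 2 ^ (m + 2) = s + 2 * (d * 2 ^ (m + 1)) := by ring
        omega, ⟨d * (e + 1) + d ^ 2 * 2 ^ m, ?_⟩⟩
      have hu' : u = s ^ 2 - 2 ^ (m + 3) * d := by linarith
      subst hu' he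
      ring

lemma int_coprime_two (a : ℤ) (ha : a % 2 = 1) : IsCoprime (2:ℤ) a := by
  rw [Int.isCoprime_iff_gcd_eq_one]
  have h1 : a.natAbs % 2 = 1 := by omega
  have : Nat.Coprime 2 a.natAbs := Nat.coprime_two_left.mpr (Nat.odd_iff.mpr h1)
  simpa [Int.gcd] using this

lemma rootsChar (n : ℕ) (s x : ℤ) (hs : s % 2 = 1) (hx : x % 2 = 1)
    (h : (2 ^ (n+3) : ℤ) ∣ x ^ 2 - s ^ 2) :
    (2 ^ (n+2) : ℤ) ∣ x - s ∨ (2 ^ (n+2) : ℤ) ∣ x + s := by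
  obtain ⟨a, ha⟩ : ∃ a, x - s = 2 * a := ⟨(x - s) / 2, by omega⟩
  obtain ⟨b, hb⟩ : ∃ b, x + s = 2 * b := ⟨(x + s) / 2, by omega⟩
  have hab : (2 ^ (n+1) : ℤ) ∣ a * b := by
    obtain ⟨c, hc⟩ := h
    refine ⟨c, ?_⟩
    have h2 : (2:ℤ) * a * (2 * b) = 4 * 2 ^ (n + 1) * c := by
      rw [← ha, ← hb]
      have h3 : (x - s) * (x + s) = x ^ 2 - s ^ 2 := by ring
      rw [h3, hc]; ring
    have h4 : (4:ℤ) * (a * b) = 4 * (2 ^ (n+1) * c) := by linear_combination h2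
    exact mul_left_cancel₀ (by norm_num : (4:ℤ) ≠ 0) h4
  have hor : a % 2 = 1 ∨ b % 2 = 1 := by omega
  have hcop : ∀ y : ℤ, y % 2 = 1 → IsCoprime ((2:ℤ) ^ (n+1)) y :=
    fun y hy => (int_coprime_two y hy).pow_left
  rcases hor with h1 | h1
  · right
    obtain ⟨c, hc⟩ := (hcop a h1).dvd_of_dvd_mul_left hab
    exact ⟨c, by rw [hb, hc]; ring⟩
  · left
    obtain ⟨c, hc⟩ := (hcop b h1).dvd_of_dvd_mul_left (by rwa [mul_comm] at hab)
    exact ⟨c, by rw [ha, hc]; ring⟩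

/-! ### ZMod bridging lemmas -/

lemma zmod_int_eq_iff (N : ℕ) (a b : ℤ) :
    ((a : ZMod N) = (b : ZMod N)) ↔ (N : ℤ) ∣ b - a := by
  rw [ZMod.intCast_eq_intCast_iff, Int.modEq_iff_dvd]

lemma cast_int_mod (N : ℕ) (a b : ℤ) (h : a % (N:ℤ) = b % (N:ℤ)) :
    ((a : ZMod N)) = (b : ZMod N) := by
  rw [ZMod.intCast_eq_intCast_iff]; exact h

lemma zmod_val_intCast_self {N : ℕ} [NeZero N] (x : ZMod N) :
    ((x.val : ℤ) : ZMod N) = x := by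
  push_cast
  rw [ZMod.natCast_val, ZMod.cast_id]

lemma zmod_val_natCast_self {N : ℕ} [NeZero N] (x : ZMod N) :
    ((x.val : ℕ) : ZMod N) = x := by
  rw [ZMod.natCast_val, ZMod.cast_id]

lemma card_Icc_filter_eq (N : ℕ) [NeZero N] (M : ℤ) (hM : M = (N:ℤ))
    (p : ℤ → Prop) (P : ZMod N → Prop)
    [DecidablePred p] [DecidablePred P]
    (hpP : ∀ j : ℤ, p j ↔ P ((j : ZMod N))) :
    ((Finset.Icc 1 M).filter p).card = (Finset.univ.filter P).card := by
  subst hM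
  have hN : 0 < N := Nat.pos_of_ne_zero (NeZero.ne N)
  have hN' : (0:ℤ) < (N:ℤ) := by exact_mod_cast hN
  refine Finset.card_nbij (fun j => (j : ZMod N)) ?_ ?_ ?_
  · intro j hj
    simp only [mem_coe, mem_filter, mem_Icc, mem_univ, true_and] at *
    exact (hpP j).mp hj.2
  · intro j1 h1 j2 h2 he
    simp only [coe_filter, Set.mem_setOf_eq, mem_Icc] at h1 h2
    have hd : ((N:ℕ):ℤ) ∣ j2 - j1 := (zmod_int_eq_iff N j1 j2).mp he
    have : j2 - j1 = 0 := Int.eq_zero_of_abs_lt_dvd hd (by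
      rw [abs_lt]
      constructor <;> [linarith [h1.1.1, h2.1.2]; linarith [h2.1.1, h1.1.2]])
    omega
  · intro x hx
    simp only [coe_filter, Set.mem_setOf_eq, mem_univ, true_and, Set.mem_image] at hx ⊢
    have hv := ZMod.val_lt x
    by_cases h0 : x.val = 0
    · have hc : (((N:ℤ)) : ZMod N) = x := by
        push_cast
        rw [ZMod.natCast_self]
        have : ((x.val : ℕ) : ZMod N) = x := zmod_val_natCast_self x
        rw [← this, h0]; simp
      refine ⟨(N:ℤ), ⟨by simp only [mem_Icc]; omega, ?_⟩, hc⟩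
      rw [hpP, hc]; exact hx
    · have hc : (((x.val : ℤ)) : ZMod N) = x := zmod_val_intCast_self x
      refine ⟨(x.val : ℤ), ⟨by simp only [mem_Icc]; omega, ?_⟩, hc⟩
      rw [hpP, hc]; exact hx

lemma card_filter_equiv {α β : Type*} [Fintype α] [Fintype β] (e : α ≃ β)
    (P : β → Prop) [DecidablePred P] [DecidablePred fun a => P (e a)] :
    (Finset.univ.filter P).card = (Finset.univ.filter fun a => P (e a)).card := by
  refine (Finset.card_nbij (fun a => e a) ?_ ?_ ?_).symm
  · intro a ha; simp only [mem_coe, mem_filter, mem_univ, true_and] at *; exact ha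
  · exact e.injective.injOn
  · intro b hb
    simp only [coe_filter, Set.mem_setOf_eq, mem_univ, true_and, Set.mem_image] at hb ⊢
    exact ⟨e.symm b, by simpa using hb, by simp⟩

instance instNZpow2 (n : ℕ) : NeZero ((2:ℕ)^n) := ⟨pow_ne_zero n two_ne_zero⟩

/-! ### The counting lemma mod `2^(w+5)` -/

lemma sol_form (w : ℕ) (u : ℤ) (hu : u % 2 = 1) (x : ZMod (2^(w+5)))
    (hx : x^2 = ((4*u : ℤ) : ZMod (2^(w+5)))) :
    ∃ b : ℤ, b % 2 = 1 ∧ (2^(w+3) : ℤ) ∣ b^2 - u ∧ ((2*b : ℤ) : ZMod (2^(w+5))) = x := by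
  have hxa : (((x.val : ℤ)) : ZMod (2^(w+5))) = x := zmod_val_intCast_self x
  obtain ⟨b, hab⟩ : ∃ b : ℤ, (x.val : ℤ) = 2*b ∨ (x.val : ℤ) = 2*b + 1 :=
    ⟨(x.val : ℤ)/2, by omega⟩
  have hsq : (((x.val : ℤ)^2 : ℤ) : ZMod (2^(w+5))) = ((4*u : ℤ) : ZMod (2^(w+5))) := by
    rw [Int.cast_pow, hxa, hx]
  have hdvd : ((2^(w+5) : ℕ) : ℤ) ∣ 4*u - (x.val : ℤ)^2 := (zmod_int_eq_iff _ _ _).mp hsq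
  push_cast at hdvd
  obtain ⟨c, hc⟩ := hdvd
  have h25 : (2:ℤ)^(w+5) = 4 * 2^(w+3) := by ring
  have hab2 : (x.val : ℤ) = 2*b := by
    rcases hab with h | h
    · exact h
    · exfalso
      rw [h] at hc
      have h2 : 4*u - (2*(2*b^2+2*b) + 1) = 2*(2*(2^(w+3))*c) := by
        rw [show (2:ℤ)*(2*b^2+2*b) + 1 = (2*b+1)^2 from by ring, hc, h25]; ring
      omega
  rw [hab2] at hc hxa
  have hb2 : (2^(w+3) : ℤ) ∣ b^2 - u := by
    refine ⟨-c, ?_⟩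
    have h4 : (4:ℤ)*(b^2 - u) = 4*(2^(w+3)*(-c)) := by
      rw [h25] at hc; linear_combination -hc
    exact mul_left_cancel₀ (by norm_num : (4:ℤ) ≠ 0) h4
  have hbo : b % 2 = 1 := by
    obtain ⟨d, hd⟩ := hb2
    have h2 := sq_emod_two b
    have : b^2 - u = 2*(2^(w+2)*d) := by rw [hd]; ring
    omega
  exact ⟨b, hbo, hb2, hxa⟩

lemma count_sq4 (w : ℕ) (u : ℤ) (hu : u % 2 = 1) :
    (Finset.univ.filter fun x : ZMod (2^(w+5)) => x^2 = ((4*u : ℤ) : ZMod (2^(w+5)))).card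
      = if u % 8 = 1 then 8 else 0 := by
  split_ifs with h8
  · obtain ⟨s, hso, hs⟩ := hensel u h8 (w+3) (by omega)
    set g : ℕ × ℕ → ZMod (2^(w+5)) := fun ij =>
      ((((-1:ℤ))^ij.1 * (2*s) + (ij.2 : ℤ) * 2^(w+3) : ℤ) : ZMod (2^(w+5))) with hg
    have hfilter : (Finset.univ.filter fun x : ZMod (2^(w+5)) =>
          x^2 = ((4*u : ℤ) : ZMod (2^(w+5))))
        = ((Finset.range 2 ×ˢ Finset.range 4)).image g := by
      ext x
      simp only [mem_filter, mem_univ, true_and, mem_image, mem_product, mem_range]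
      constructor
      · intro hx
        obtain ⟨b, hbo, hb2, hbx⟩ := sol_form w u hu x hx
        have hbs : (2^(w+3):ℤ) ∣ b^2 - s^2 := by
          have := dvd_sub hb2 hs
          simpa using this
        have hmod4 : ∀ t : ℤ, 0 ≤ t % 4 ∧ t % 4 < 4 ∧ 4*(t/4) + t % 4 = t :=
          fun t => ⟨Int.emod_nonneg t (by norm_num), Int.emod_lt_of_pos t (by norm_num),
            Int.mul_ediv_add_emod t 4⟩
        rcases rootsChar w s b hso hbo hbs with ⟨t, ht⟩ | ⟨t, ht⟩
        · obtain ⟨hm0, hm1, hm2⟩ := hmod4 t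
          refine ⟨(0, (t % 4).toNat), ⟨by norm_num, by omega⟩, ?_⟩
          rw [← hbx, hg]
          simp only [pow_zero, one_mul]
          rw [zmod_int_eq_iff]
          push_cast [Int.toNat_of_nonneg hm0]
          exact ⟨t/4, by linear_combination 2*ht - 2^(w+3)*hm2⟩
        · obtain ⟨hm0, hm1, hm2⟩ := hmod4 t
          refine ⟨(1, (t % 4).toNat), ⟨by norm_num, by omega⟩, ?_⟩
          rw [← hbx, hg]
          simp only [pow_one]
          rw [zmod_int_eq_iff]
          push_cast [Int.toNat_of_nonneg hm0]
          exact ⟨t/4, by linear_combination 2*ht - 2^(w+3)*hm2⟩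
      · rintro ⟨⟨i, j⟩, ⟨hi, hj⟩, rfl⟩
        obtain ⟨d, hd⟩ := hs
        have hsq : (g (i, j))^2
            = (((((-1:ℤ))^i * (2*s) + (j : ℤ) * 2^(w+3))^2 : ℤ) : ZMod (2^(w+5))) := by
          rw [hg]; push_cast; ring
        rw [hsq, zmod_int_eq_iff]
        interval_cases i
        · refine ⟨-d - (s*(j:ℤ) + (j:ℤ)^2*2^(w+1)), ?_⟩
          push_cast
          linear_combination (-4:ℤ)*hd
        · refine ⟨-d - (-s*(j:ℤ) + (j:ℤ)^2*2^(w+1)), ?_⟩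
          push_cast
          linear_combination (-4:ℤ)*hd
    rw [hfilter, Finset.card_image_of_injOn, Finset.card_product, Finset.card_range,
      Finset.card_range]
    rintro ⟨i, j⟩ hij ⟨i', j'⟩ hij' heq
    simp only [coe_product, coe_range, Set.mem_prod, Set.mem_Iio] at hij hij'
    obtain ⟨hi, hj⟩ := hij
    obtain ⟨hi', hj'⟩ := hij'
    rw [hg] at heq
    simp only at heq
    rw [zmod_int_eq_iff] at heq
    push_cast at heq
    obtain ⟨c, hc⟩ := heq
    interval_cases i <;> interval_cases i' <;>
      simp only [pow_zero, pow_one, one_mul, neg_mul] at hc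
    · have hcancel : (j':ℤ) - j = 4*c := by
        refine mul_right_cancel₀ (pow_ne_zero (w+3) (two_ne_zero (α := ℤ))) ?_
        linear_combination hc
      have : j = j' := by omega
      simp [this]
    · exfalso
      obtain ⟨X, hX⟩ : ∃ X : ℤ, (4:ℤ)*s = 8*X :=
        ⟨-(2^(w+2)*c) + (j':ℤ)*2^w - (j:ℤ)*2^w, by linear_combination -hc⟩
      omega
    · exfalso
      obtain ⟨X, hX⟩ : ∃ X : ℤ, (4:ℤ)*s = 8*X :=
        ⟨(2^(w+2)*c) - (j':ℤ)*2^w + (j:ℤ)*2^w, by linear_combination hc⟩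
      omega
    · have hcancel : (j':ℤ) - j = 4*c := by
        refine mul_right_cancel₀ (pow_ne_zero (w+3) (two_ne_zero (α := ℤ))) ?_
        linear_combination hc
      have : j = j' := by omega
      simp [this]
  · rw [Finset.card_eq_zero, Finset.filter_eq_empty_iff]
    intro x _
    intro hx
    obtain ⟨b, hbo, hb2, -⟩ := sol_form w u hu x hx
    obtain ⟨d, hd⟩ := hb2
    have h1 := odd_sq_mod8 b hbo
    have : b^2 - u = 8*(2^w*d) := by rw [hd]; ring
    omega

lemma count_sol_even (n : ℕ) (c : ℤ) (hc : c % 2 = 0) :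
    (Finset.univ.filter fun x : ZMod (2^(n+1)) =>
      x^2 = ((c : ℤ) : ZMod (2^(n+1))) ∧ x.val % 2 = 1).card = 0 := by
  rw [Finset.card_eq_zero, Finset.filter_eq_empty_iff]
  rintro x - ⟨h1, h2⟩
  have hxa : (((x.val : ℤ)) : ZMod (2^(n+1))) = x := zmod_val_intCast_self x
  have hsq : (((x.val : ℤ)^2 : ℤ) : ZMod (2^(n+1))) = ((c:ℤ) : ZMod (2^(n+1))) := by
    rw [Int.cast_pow, hxa, h1]
  have hd := (zmod_int_eq_iff _ _ _).mp hsq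
  push_cast at hd
  obtain ⟨d, hd⟩ := hd
  have h2' : c - (x.val:ℤ)^2 = 2*(2^n*d) := by rw [hd]; ring
  have h3 := sq_emod_two (x.val : ℤ)
  omega

/-- `|J_r(v)| = #{1 ≤ j ≤ 2^{2v+3} : (j − mk)² ≡ 4k + 4^v r (mod 2^{2v+3}), 2 ∣ jm}`. -/
noncomputable def Jcard (m k v r : ℕ) : ℕ :=
  ((Finset.Icc 1 (2 ^ (2 * v + 3))).filter fun j =>
    ((j : ℤ) - m * k) ^ 2 ≡ 4 * k + 4 ^ v * r [ZMOD (2 ^ (2 * v + 3) : ℕ)] ∧ 2 ∣ j * m).card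

/-- `𝒥(v) = 2^{1−v₀} (|J₀(v)|/2 + |J₁(v)| + |J₄(v)|/2 + |J₅(v)|/3)` where `v₀ = 2` for odd `m`
and `v₀ = 3` for even `m`; the weights are `2 − (r/2)` for the Kronecker symbol `(r/2)`. -/
noncomputable def Jv (m k v : ℕ) : ℝ :=
  (1 / 2 ^ ((if 2 ∣ m then 3 else 2) - 1 : ℕ)) *
    ((Jcard m k v 0 : ℝ) / 2 + (Jcard m k v 1 : ℝ) / 1 +
      (Jcard m k v 4 : ℝ) / 2 + (Jcard m k v 5 : ℝ) / 3)

/-- `𝒥 = Σ_{v ≥ 0, gcd(2^v, k) = 1} 𝒥(v)/8^v`. -/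
noncomputable def Jtotal (m k : ℕ) : ℝ :=
  ∑' v : ℕ, if Nat.gcd (2 ^ v) k = 1 then Jv m k v / 8 ^ v else 0

lemma int_parity_val (N : ℕ) [NeZero N] (h2N : 2 ∣ N) (j : ℤ) :
    2 ∣ j ↔ ((j : ZMod N)).val % 2 = 0 := by
  have h1 : ((((j : ZMod N)).val : ℕ) : ZMod 2) = ((j : ZMod 2)) := by
    rw [ZMod.natCast_val, ← ZMod.castHom_apply (h := h2N), map_intCast]
  constructor
  · intro h
    have h0 : ((j : ZMod 2)) = 0 := (ZMod.intCast_zmod_eq_zero_iff_dvd j 2).mpr h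
    have h2 : ((((j : ZMod N)).val : ℕ) : ZMod 2) = 0 := by rw [h1, h0]
    have h3 : 2 ∣ ((j : ZMod N)).val := (ZMod.natCast_eq_zero_iff _ 2).mp h2
    omega
  · intro h
    have h3 : ((((j : ZMod N)).val : ℕ) : ZMod 2) = 0 :=
      (ZMod.natCast_eq_zero_iff _ 2).mpr (by omega)
    rw [h1] at h3
    exact (ZMod.intCast_zmod_eq_zero_iff_dvd j 2).mp h3

lemma Jcard_eq_count (m k v r : ℕ) :
    Jcard m k v r = (Finset.univ.filter fun x : ZMod (2^(2*v+3)) =>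
      x^2 = ((4*(k:ℤ) + 4^v*(r:ℤ) : ℤ) : ZMod (2^(2*v+3)))
        ∧ (2 ∣ m ∨ (x + ((m*k : ℕ) : ZMod (2^(2*v+3)))).val % 2 = 0)).card := by
  have h2N : 2 ∣ 2^(2*v+3) := dvd_pow_self 2 (by omega)
  rw [Jcard]
  rw [card_Icc_filter_eq (2^(2*v+3)) ((2:ℤ)^(2*v+3)) (by push_cast; ring) _
    (P := fun y : ZMod (2^(2*v+3)) =>
      (y - ((m*k : ℕ) : ZMod (2^(2*v+3))))^2
          = ((4*(k:ℤ) + 4^v*(r:ℤ) : ℤ) : ZMod (2^(2*v+3)))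
        ∧ (2 ∣ m ∨ y.val % 2 = 0)) ?_]
  · rw [card_filter_equiv (Equiv.addRight ((m*k : ℕ) : ZMod (2^(2*v+3))))]
    congr 1
    ext x
    simp only [mem_filter, mem_univ, true_and, Equiv.coe_addRight, add_sub_cancel_right]
  · intro j
    have hint : ∀ a b : ℤ, (a ≡ b [ZMOD ((2^(2*v+3) : ℕ) : ℤ)]) ↔
        ((a : ZMod (2^(2*v+3))) = (b : ZMod (2^(2*v+3)))) :=
      fun a b => (ZMod.intCast_eq_intCast_iff a b _).symm
    have hmul : (2:ℤ) ∣ j * (m:ℤ) ↔ (2:ℤ) ∣ j ∨ (2:ℤ) ∣ (m:ℤ) := Int.prime_two.dvd_mul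
    have hm2 : (2:ℤ) ∣ (m:ℤ) ↔ 2 ∣ m := by exact_mod_cast Iff.rfl
    have hpar := int_parity_val (2^(2*v+3)) h2N j
    constructor
    · rintro ⟨h1, h2⟩
      rw [hint] at h1
      push_cast at h1
      refine ⟨by push_cast; exact h1, ?_⟩
      rcases hmul.mp h2 with h | h
      · exact Or.inr (hpar.mp h)
      · exact Or.inl (hm2.mp h)
    · rintro ⟨h1, h2⟩
      refine ⟨?_, ?_⟩
      · rw [hint]
        push_cast at h1 ⊢
        exact h1
      · rcases h2 with h | h
        · exact hmul.mpr (Or.inr (hm2.mpr h))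
        · exact hmul.mpr (Or.inl (hpar.mpr h))

lemma Jcard_even (m k v r : ℕ) (h2m : 2 ∣ m) (c : ℤ)
    (hc : (4*(k:ℤ) + 4^v*(r:ℤ)) % ((2^(2*v+3) : ℕ) : ℤ) = c % ((2^(2*v+3) : ℕ) : ℤ)) :
    Jcard m k v r
      = (Finset.univ.filter fun x : ZMod (2^(2*v+3)) =>
          x^2 = ((c : ℤ) : ZMod (2^(2*v+3)))).card := by
  rw [Jcard_eq_count]
  have hcast := cast_int_mod (2^(2*v+3)) _ _ hc
  simp only [hcast]
  congr 1
  ext x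
  simp only [mem_filter, mem_univ, true_and, h2m, true_or, and_true]

lemma Jcard_odd (m k v r : ℕ) (hm : ¬ 2 ∣ m) (c : ℤ) (ε : ℕ) (hε : k % 2 = ε)
    (hc : (4*(k:ℤ) + 4^v*(r:ℤ)) % ((2^(2*v+3) : ℕ) : ℤ) = c % ((2^(2*v+3) : ℕ) : ℤ)) :
    Jcard m k v r
      = (Finset.univ.filter fun x : ZMod (2^(2*v+3)) =>
          x^2 = ((c : ℤ) : ZMod (2^(2*v+3))) ∧ x.val % 2 = ε).card := by
  have h2N : 2 ∣ 2^(2*v+3) := dvd_pow_self 2 (by omega)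
  rw [Jcard_eq_count]
  have hcast := cast_int_mod (2^(2*v+3)) _ _ hc
  simp only [hcast]
  congr 1
  ext x
  simp only [mem_filter, mem_univ, true_and, hm, false_or]
  have hA : ((((m*k : ℕ)) : ZMod (2^(2*v+3)))).val % 2 = (m*k) % 2 := by
    rw [ZMod.val_natCast]; exact Nat.mod_mod_of_dvd _ h2N
  have hB : (x + ((m*k : ℕ) : ZMod (2^(2*v+3)))).val % 2
      = (x.val + (((m*k : ℕ)) : ZMod (2^(2*v+3))).val) % 2 := by
    rw [ZMod.val_add]; exact Nat.mod_mod_of_dvd _ h2N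
  have hmk : (m * k) % 2 = ε := by
    have h1 : m % 2 = 1 := by omega
    have h2 : m * k % 2 = (m % 2) * (k % 2) % 2 := Nat.mul_mod m k 2
    rw [h1, one_mul, Nat.mod_mod_of_dvd k (dvd_refl 2)] at h2
    omega
  constructor
  · rintro ⟨h1, h2⟩; exact ⟨h1, by omega⟩
  · rintro ⟨h1, h2⟩; exact ⟨h1, by omega⟩

lemma Jv0_ee (m k : ℕ) (h2m : 2 ∣ m) (h2k : 2 ∣ k) : Jv m k 0 = 3/2 := by
  rw [Jv, if_pos h2m,
    Jcard_even m k 0 0 h2m 0 (by push_cast; omega),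
    Jcard_even m k 0 1 h2m 1 (by push_cast; omega),
    Jcard_even m k 0 4 h2m 4 (by push_cast; omega),
    Jcard_even m k 0 5 h2m 5 (by push_cast; omega),
    show (Finset.univ.filter fun x : ZMod (2^(2*0+3)) =>
      x^2 = ((0:ℤ) : ZMod (2^(2*0+3)))).card = 2 from by decide,
    show (Finset.univ.filter fun x : ZMod (2^(2*0+3)) =>
      x^2 = ((1:ℤ) : ZMod (2^(2*0+3)))).card = 4 from by decide,
    show (Finset.univ.filter fun x : ZMod (2^(2*0+3)) =>
      x^2 = ((4:ℤ) : ZMod (2^(2*0+3)))).card = 2 from by decide,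
    show (Finset.univ.filter fun x : ZMod (2^(2*0+3)) =>
      x^2 = ((5:ℤ) : ZMod (2^(2*0+3)))).card = 0 from by decide]
  norm_num

lemma Jv0_oe (m k : ℕ) (hm : ¬ 2 ∣ m) (h2k : 2 ∣ k) : Jv m k 0 = 1 := by
  have hε : k % 2 = 0 := by omega
  rw [Jv, if_neg hm,
    Jcard_odd m k 0 0 hm 0 0 hε (by push_cast; omega),
    Jcard_odd m k 0 1 hm 1 0 hε (by push_cast; omega),
    Jcard_odd m k 0 4 hm 4 0 hε (by push_cast; omega),
    Jcard_odd m k 0 5 hm 5 0 hε (by push_cast; omega),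
    show (Finset.univ.filter fun x : ZMod (2^(2*0+3)) =>
      x^2 = ((0:ℤ) : ZMod (2^(2*0+3))) ∧ x.val % 2 = 0).card = 2 from by decide,
    show (Finset.univ.filter fun x : ZMod (2^(2*0+3)) =>
      x^2 = ((1:ℤ) : ZMod (2^(2*0+3))) ∧ x.val % 2 = 0).card = 0 from by decide,
    show (Finset.univ.filter fun x : ZMod (2^(2*0+3)) =>
      x^2 = ((4:ℤ) : ZMod (2^(2*0+3))) ∧ x.val % 2 = 0).card = 2 from by decide,
    show (Finset.univ.filter fun x : ZMod (2^(2*0+3)) =>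
      x^2 = ((5:ℤ) : ZMod (2^(2*0+3))) ∧ x.val % 2 = 0).card = 0 from by decide]
  norm_num

lemma Jv0_oo (m k : ℕ) (hm : ¬ 2 ∣ m) (hk : ¬ 2 ∣ k) : Jv m k 0 = 2/3 := by
  have hε : k % 2 = 1 := by omega
  rw [Jv, if_neg hm,
    Jcard_odd m k 0 0 hm 4 1 hε (by push_cast; omega),
    Jcard_odd m k 0 1 hm 5 1 hε (by push_cast; omega),
    Jcard_odd m k 0 4 hm 0 1 hε (by push_cast; omega),
    Jcard_odd m k 0 5 hm 1 1 hε (by push_cast; omega),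
    show (Finset.univ.filter fun x : ZMod (2^(2*0+3)) =>
      x^2 = ((4:ℤ) : ZMod (2^(2*0+3))) ∧ x.val % 2 = 1).card = 0 from by decide,
    show (Finset.univ.filter fun x : ZMod (2^(2*0+3)) =>
      x^2 = ((5:ℤ) : ZMod (2^(2*0+3))) ∧ x.val % 2 = 1).card = 0 from by decide,
    show (Finset.univ.filter fun x : ZMod (2^(2*0+3)) =>
      x^2 = ((0:ℤ) : ZMod (2^(2*0+3))) ∧ x.val % 2 = 1).card = 0 from by decide,
    show (Finset.univ.filter fun x : ZMod (2^(2*0+3)) =>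
      x^2 = ((1:ℤ) : ZMod (2^(2*0+3))) ∧ x.val % 2 = 1).card = 4 from by decide]
  norm_num

lemma Jv0_eo (m k : ℕ) (h2m : 2 ∣ m) (hk : ¬ 2 ∣ k) : Jv m k 0 = 5/6 := by
  rw [Jv, if_pos h2m,
    Jcard_even m k 0 0 h2m 4 (by push_cast; omega),
    Jcard_even m k 0 1 h2m 5 (by push_cast; omega),
    Jcard_even m k 0 4 h2m 0 (by push_cast; omega),
    Jcard_even m k 0 5 h2m 1 (by push_cast; omega),
    show (Finset.univ.filter fun x : ZMod (2^(2*0+3)) =>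
      x^2 = ((4:ℤ) : ZMod (2^(2*0+3)))).card = 2 from by decide,
    show (Finset.univ.filter fun x : ZMod (2^(2*0+3)) =>
      x^2 = ((5:ℤ) : ZMod (2^(2*0+3)))).card = 0 from by decide,
    show (Finset.univ.filter fun x : ZMod (2^(2*0+3)) =>
      x^2 = ((0:ℤ) : ZMod (2^(2*0+3)))).card = 2 from by decide,
    show (Finset.univ.filter fun x : ZMod (2^(2*0+3)) =>
      x^2 = ((1:ℤ) : ZMod (2^(2*0+3)))).card = 4 from by decide]
  norm_num

lemma Jv_oo_pos (m k w : ℕ) (hm : ¬ 2 ∣ m) (hk : ¬ 2 ∣ k) : Jv m k (w+1) = 0 := by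
  have hε : k % 2 = 1 := by omega
  have hcast : ∀ r : ℕ, ((4*(k:ℤ) + 4^(w+1)*(r:ℤ))) % 2 = 0 := by
    intro r
    obtain ⟨e, he⟩ : ∃ e:ℤ, (4:ℤ)^(w+1)*(r:ℤ) = 2*e := ⟨2*4^w*(r:ℤ), by ring⟩
    omega
  rw [Jv, if_neg hm,
    Jcard_odd m k (w+1) 0 hm _ 1 hε rfl,
    Jcard_odd m k (w+1) 1 hm _ 1 hε rfl,
    Jcard_odd m k (w+1) 4 hm _ 1 hε rfl,
    Jcard_odd m k (w+1) 5 hm _ 1 hε rfl,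
    count_sol_even (2*(w+1)+2) _ (hcast 0),
    count_sol_even (2*(w+1)+2) _ (hcast 1),
    count_sol_even (2*(w+1)+2) _ (hcast 4),
    count_sol_even (2*(w+1)+2) _ (hcast 5)]
  norm_num

lemma Jv1_eo (m k : ℕ) (h2m : 2 ∣ m) (hk : ¬ 2 ∣ k) :
    Jv m k 1 = if k % 8 = 1 ∨ k % 8 = 5 then 1 else 4/3 := by
  rcases (by omega : k % 8 = 1 ∨ k % 8 = 3 ∨ k % 8 = 5 ∨ k % 8 = 7) with h|h|h|h
  · rw [Jv, if_pos h2m,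
      Jcard_even m k 1 0 h2m 4 (by push_cast; omega),
      Jcard_even m k 1 1 h2m 8 (by push_cast; omega),
      Jcard_even m k 1 4 h2m 20 (by push_cast; omega),
      Jcard_even m k 1 5 h2m 24 (by push_cast; omega),
      show (Finset.univ.filter fun x : ZMod (2^(2*1+3)) =>
        x^2 = ((4:ℤ) : ZMod (2^(2*1+3)))).card = 8 from by decide,
      show (Finset.univ.filter fun x : ZMod (2^(2*1+3)) =>
        x^2 = ((8:ℤ) : ZMod (2^(2*1+3)))).card = 0 from by decide,
      show (Finset.univ.filter fun x : ZMod (2^(2*1+3)) =>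
        x^2 = ((20:ℤ) : ZMod (2^(2*1+3)))).card = 0 from by decide,
      show (Finset.univ.filter fun x : ZMod (2^(2*1+3)) =>
        x^2 = ((24:ℤ) : ZMod (2^(2*1+3)))).card = 0 from by decide,
      if_pos (Or.inl h)]
    norm_num
  · rw [Jv, if_pos h2m,
      Jcard_even m k 1 0 h2m 12 (by push_cast; omega),
      Jcard_even m k 1 1 h2m 16 (by push_cast; omega),
      Jcard_even m k 1 4 h2m 28 (by push_cast; omega),
      Jcard_even m k 1 5 h2m 0 (by push_cast; omega),
      show (Finset.univ.filter fun x : ZMod (2^(2*1+3)) =>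
        x^2 = ((12:ℤ) : ZMod (2^(2*1+3)))).card = 0 from by decide,
      show (Finset.univ.filter fun x : ZMod (2^(2*1+3)) =>
        x^2 = ((16:ℤ) : ZMod (2^(2*1+3)))).card = 4 from by decide,
      show (Finset.univ.filter fun x : ZMod (2^(2*1+3)) =>
        x^2 = ((28:ℤ) : ZMod (2^(2*1+3)))).card = 0 from by decide,
      show (Finset.univ.filter fun x : ZMod (2^(2*1+3)) =>
        x^2 = ((0:ℤ) : ZMod (2^(2*1+3)))).card = 4 from by decide,
      if_neg (by omega)]
    norm_num
  · rw [Jv, if_pos h2m,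
      Jcard_even m k 1 0 h2m 20 (by push_cast; omega),
      Jcard_even m k 1 1 h2m 24 (by push_cast; omega),
      Jcard_even m k 1 4 h2m 4 (by push_cast; omega),
      Jcard_even m k 1 5 h2m 8 (by push_cast; omega),
      show (Finset.univ.filter fun x : ZMod (2^(2*1+3)) =>
        x^2 = ((20:ℤ) : ZMod (2^(2*1+3)))).card = 0 from by decide,
      show (Finset.univ.filter fun x : ZMod (2^(2*1+3)) =>
        x^2 = ((24:ℤ) : ZMod (2^(2*1+3)))).card = 0 from by decide,
      show (Finset.univ.filter fun x : ZMod (2^(2*1+3)) =>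
        x^2 = ((4:ℤ) : ZMod (2^(2*1+3)))).card = 8 from by decide,
      show (Finset.univ.filter fun x : ZMod (2^(2*1+3)) =>
        x^2 = ((8:ℤ) : ZMod (2^(2*1+3)))).card = 0 from by decide,
      if_pos (Or.inr h)]
    norm_num
  · rw [Jv, if_pos h2m,
      Jcard_even m k 1 0 h2m 28 (by push_cast; omega),
      Jcard_even m k 1 1 h2m 0 (by push_cast; omega),
      Jcard_even m k 1 4 h2m 12 (by push_cast; omega),
      Jcard_even m k 1 5 h2m 16 (by push_cast; omega),
      show (Finset.univ.filter fun x : ZMod (2^(2*1+3)) =>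
        x^2 = ((28:ℤ) : ZMod (2^(2*1+3)))).card = 0 from by decide,
      show (Finset.univ.filter fun x : ZMod (2^(2*1+3)) =>
        x^2 = ((0:ℤ) : ZMod (2^(2*1+3)))).card = 4 from by decide,
      show (Finset.univ.filter fun x : ZMod (2^(2*1+3)) =>
        x^2 = ((12:ℤ) : ZMod (2^(2*1+3)))).card = 0 from by decide,
      show (Finset.univ.filter fun x : ZMod (2^(2*1+3)) =>
        x^2 = ((16:ℤ) : ZMod (2^(2*1+3)))).card = 4 from by decide,
      if_neg (by omega)]
    norm_num

lemma Jcard_big (m k w r : ℕ) (h2m : 2 ∣ m) (hk : k % 2 = 1) :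
    Jcard m k (w+2) r = if ((k:ℤ) + 4^(w+1)*(r:ℤ)) % 8 = 1 then 8 else 0 := by
  rw [Jcard_even m k (w+2) r h2m (4*((k:ℤ) + 4^(w+1)*(r:ℤ)))
      (by push_cast; congr 1; ring)]
  have hu : ((k:ℤ) + 4^(w+1)*(r:ℤ)) % 2 = 1 := by
    obtain ⟨e, he⟩ : ∃ e:ℤ, (4:ℤ)^(w+1)*(r:ℤ) = 2*e := ⟨2*4^w*(r:ℤ), by ring⟩
    omega
  exact count_sq4 (2*w+2) _ hu

lemma Jv_v2 (m k : ℕ) (h2m : 2 ∣ m) (hk : ¬ 2 ∣ k) :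
    Jv m k 2 = if k % 8 = 1 then 2 else if k % 8 = 5 then 8/3 else 0 := by
  have hk1 : k % 2 = 1 := by omega
  have h0 := Jcard_big m k 0 0 h2m hk1
  have h1 := Jcard_big m k 0 1 h2m hk1
  have h4 := Jcard_big m k 0 4 h2m hk1
  have h5 := Jcard_big m k 0 5 h2m hk1
  norm_num at h0 h1 h4 h5
  rw [Jv, if_pos h2m, h0, h1, h4, h5]
  split_ifs <;> first
    | (exfalso; omega)
    | norm_num

lemma Jv_v3plus (m k w : ℕ) (h2m : 2 ∣ m) (hk : ¬ 2 ∣ k) :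
    Jv m k (w+3) = if k % 8 = 1 then 14/3 else 0 := by
  have hk1 : k % 2 = 1 := by omega
  have h0 := Jcard_big m k (w+1) 0 h2m hk1
  have h1 := Jcard_big m k (w+1) 1 h2m hk1
  have h4 := Jcard_big m k (w+1) 4 h2m hk1
  have h5 := Jcard_big m k (w+1) 5 h2m hk1
  obtain ⟨e, he⟩ : ∃ e : ℤ, (4:ℤ)^(w+2) = 8*e := ⟨2*4^w, by ring⟩
  norm_num at h0 h1 h4 h5
  rw [Jv, if_pos h2m, h0, h1, h4, h5]
  split_ifs <;> first
    | (exfalso; omega)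
    | norm_num

lemma tsum_helper (f : ℕ → ℝ) (a0 a1 a2 T : ℝ)
    (h0 : f 0 = a0) (h1 : f 1 = a1) (h2 : f 2 = a2)
    (ht : ∀ v, f (v+3) = T * (1/8:ℝ)^v) :
    ∑' v, f v = a0 + a1 + a2 + T * (8/7) := by
  have hs : Summable f := by
    rw [← summable_nat_add_iff 3]
    exact ((summable_geometric_of_lt_one (by norm_num) (by norm_num)).mul_left T).congr
      (fun v => (ht v).symm)
  rw [← hs.sum_add_tsum_nat_add 3, tsum_congr ht, tsum_mul_left,
    tsum_geometric_of_lt_one (by norm_num) (by norm_num),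
    Finset.sum_range_succ, Finset.sum_range_succ, Finset.sum_range_one, h0, h1, h2]
  norm_num

lemma Jtotal_single (m k : ℕ)
    (h : ∀ v, 1 ≤ v → (if Nat.gcd (2^v) k = 1 then Jv m k v / 8^v else 0) = 0) :
    Jtotal m k = Jv m k 0 := by
  rw [Jtotal, tsum_eq_single 0 (fun v hv => h v (by omega))]
  norm_num

lemma Jtotal_oo (m k : ℕ) (hm : ¬ 2 ∣ m) (hk : ¬ 2 ∣ k) : Jtotal m k = 2/3 := by
  rw [Jtotal_single m k ?_, Jv0_oo m k hm hk]
  intro v hv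
  obtain ⟨w, rfl⟩ : ∃ w, v = w + 1 := ⟨v - 1, by omega⟩
  rw [Jv_oo_pos m k w hm hk]
  simp

lemma Jtotal_ee (m k : ℕ) (h2m : 2 ∣ m) (h2k : 2 ∣ k) : Jtotal m k = 3/2 := by
  rw [Jtotal_single m k ?_, Jv0_ee m k h2m h2k]
  intro v hv
  have hd : 2 ∣ Nat.gcd (2^v) k := Nat.dvd_gcd (dvd_pow_self 2 (by omega)) h2k
  rw [if_neg (by omega)]

lemma Jtotal_oe (m k : ℕ) (hm : ¬ 2 ∣ m) (h2k : 2 ∣ k) : Jtotal m k = 1 := by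
  rw [Jtotal_single m k ?_, Jv0_oe m k hm h2k]
  intro v hv
  have hd : 2 ∣ Nat.gcd (2^v) k := Nat.dvd_gcd (dvd_pow_self 2 (by omega)) h2k
  rw [if_neg (by omega)]

lemma Jtotal_eo (m k : ℕ) (h2m : 2 ∣ m) (hk : ¬ 2 ∣ k) : Jtotal m k = 1 := by
  have hodd : k % 2 = 1 := by omega
  have hg : ∀ v, Nat.gcd (2^v) k = 1 := fun v =>
    Nat.Coprime.pow_left v (Nat.coprime_two_left.mpr (Nat.odd_iff.mpr hodd))
  have hJ : Jtotal m k = ∑' v, Jv m k v / 8^v := tsum_congr (fun v => if_pos (hg v))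
  rw [hJ]
  have hv0 := Jv0_eo m k h2m hk
  have hv1 := Jv1_eo m k h2m hk
  have hv2 := Jv_v2 m k h2m hk
  rcases (by omega : k % 8 = 1 ∨ k % 8 = 3 ∨ k % 8 = 5 ∨ k % 8 = 7) with h|h|h|h
  · rw [tsum_helper _ (5/6) (1/8) (1/32) ((14/3)/512)
      (by rw [hv0]; norm_num)
      (by rw [hv1, if_pos (Or.inl h)]; norm_num)
      (by rw [hv2, if_pos h]; norm_num)
      (by intro v; rw [Jv_v3plus m k v h2m hk, if_pos h, pow_add]; norm_num; rw [one_div, inv_pow]; ring)]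
    norm_num
  · rw [tsum_helper _ (5/6) (1/6) 0 0
      (by rw [hv0]; norm_num)
      (by rw [hv1, if_neg (by omega)]; norm_num)
      (by rw [hv2, if_neg (by omega), if_neg (by omega)]; norm_num)
      (by intro v; rw [Jv_v3plus m k v h2m hk, if_neg (by omega)]; norm_num)]
    norm_num
  · rw [tsum_helper _ (5/6) (1/8) ((8/3)/64) 0
      (by rw [hv0]; norm_num)
      (by rw [hv1, if_pos (Or.inr h)]; norm_num)
      (by rw [hv2, if_neg (by omega), if_pos h]; norm_num)
      (by intro v; rw [Jv_v3plus m k v h2m hk, if_neg (by omega)]; norm_num)]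
    norm_num
  · rw [tsum_helper _ (5/6) (1/6) 0 0
      (by rw [hv0]; norm_num)
      (by rw [hv1, if_neg (by omega)]; norm_num)
      (by rw [hv2, if_neg (by omega), if_neg (by omega)]; norm_num)
      (by intro v; rw [Jv_v3plus m k v h2m hk, if_neg (by omega)]; norm_num)]
    norm_num

theorem formula_for_J (m k : ℕ) (hm : 1 ≤ m) (hk : 1 ≤ k) :
    (¬2 ∣ m ∧ ¬2 ∣ k → Jtotal m k = 2 / 3) ∧
    (2 ∣ m ∧ 2 ∣ k → Jtotal m k = 3 / 2) ∧
    ((2 ∣ m ∧ ¬2 ∣ k) ∨ (¬2 ∣ m ∧ 2 ∣ k) → Jtotal m k = 1) := by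
  refine ⟨fun ⟨h1, h2⟩ => Jtotal_oo m k h1 h2, fun ⟨h1, h2⟩ => Jtotal_ee m k h1 h2, ?_⟩
  rintro (⟨h1, h2⟩ | ⟨h1, h2⟩)
  · exact Jtotal_eo m k h1 h2
  · exact Jtotal_oe m k h1 h2
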